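/- Quadratic Casimir equation for four-dimensional conformal blocks: define D_x f := (1−x)·x²·∂_x² f − x²·∂_x f and the d = 4 quadratic Casimir operator C₂ := D_z + D_z̄ + 2·(z z̄/(z − z̄))·((1−z)∂_z − (1−z̄)∂_z̄). Then for every real τ > 2, every nonnegative integer ℓ, and all z ≠ z̄ in (0,1), C₂ G_{τ,ℓ}(z,z̄) = (1/2)·(ℓ(ℓ+2) + Δ(Δ−4))·G_{τ,ℓ}(z,z̄), where Δ := τ + ℓ. -/

import Mathlib

open Real

open Filter Topology

/-- Pochhammer symbol `(a)_n = a (a+1) ⋯ (a+n-1)`. -/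
noncomputable def poch (a : ℝ) (n : ℕ) : ℝ := (ascPochhammer ℝ n).eval a

/-- Gauss hypergeometric series `₂F₁(a,b;c;x)`. -/
noncomputable def F21 (a b c x : ℝ) : ℝ :=
  ∑' n : ℕ, poch a n * poch b n / (poch c n * (n.factorial : ℝ)) * x ^ n

/-- The SL(2,ℝ) collinear conformal block `k_β(x) = x^β ₂F₁(β,β;2β;x)`. -/
noncomputable def kblock (β x : ℝ) : ℝ := x ^ β * F21 β β (2 * β) x

/-- The four-dimensional conformal block of twist τ and spin ℓ:
`G_{τ,ℓ}(z,z̄) = (z z̄/(z−z̄))·(k_{τ/2+ℓ}(z) k_{τ/2−1}(z̄) − k_{τ/2+ℓ}(z̄) k_{τ/2−1}(z))`. -/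
noncomputable def G4block (τ : ℝ) (ℓ : ℕ) (z zb : ℝ) : ℝ :=
  z * zb / (z - zb) *
    (kblock (τ / 2 + (ℓ : ℝ)) z * kblock (τ / 2 - 1) zb
      - kblock (τ / 2 + (ℓ : ℝ)) zb * kblock (τ / 2 - 1) z)

/-- The one-variable operator `D_x f = (1−x)x² f''(x) − x² f'(x)`. -/
noncomputable def Dop (f : ℝ → ℝ) (x : ℝ) : ℝ :=
  (1 - x) * x ^ 2 * deriv (deriv f) x - x ^ 2 * deriv f x

/-- The d = 4 quadratic Casimir operator
`C₂ = D_z + D_z̄ + 2 (z z̄/(z−z̄))·((1−z)∂_z − (1−z̄)∂_z̄)`. -/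
noncomputable def Casimir2 (f : ℝ → ℝ → ℝ) (z zb : ℝ) : ℝ :=
  Dop (fun w => f w zb) z + Dop (fun w => f z w) zb
    + 2 * (z * zb / (z - zb)) *
        ((1 - z) * deriv (fun w => f w zb) z - (1 - zb) * deriv (fun w => f z w) zb)

noncomputable def coef (β : ℝ) (n : ℕ) : ℝ :=
  poch β n * poch β n / (poch (2 * β) n * (n.factorial : ℝ))

lemma poch_succ (a : ℝ) (n : ℕ) : poch a (n + 1) = poch a n * (a + n) := by
  simp [poch, ascPochhammer_succ_eval]

lemma poch_pos {a : ℝ} (ha : 0 < a) (n : ℕ) : 0 < poch a n := by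
  induction n with
  | zero => simp [poch]
  | succ n ih => rw [poch_succ]; positivity

lemma coef_pos {β : ℝ} (hβ : 0 < β) (n : ℕ) : 0 < coef β n := by
  have := poch_pos hβ n
  have := poch_pos (by linarith : (0:ℝ) < 2 * β) n
  have : (0:ℝ) < n.factorial := by positivity
  unfold coef; positivity

lemma coef_succ {β : ℝ} (hβ : 0 < β) (n : ℕ) :
    coef β (n + 1) = coef β n * ((β + n) ^ 2 / ((2 * β + n) * (n + 1))) := by
  have h1 : (0:ℝ) < poch (2 * β) n := poch_pos (by linarith) n
  have h2 : (0:ℝ) < (n.factorial : ℝ) := by positivity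
  unfold coef
  rw [poch_succ, poch_succ, Nat.factorial_succ]
  have h3 : (0:ℝ) < 2 * β + n := by positivity
  have h4 : (0:ℝ) < (n:ℝ) + 1 := by positivity
  push_cast
  field_simp

lemma tendsto_ratio_aux (c d : ℝ) :
    Tendsto (fun n : ℕ => (c + n) / (d + n)) atTop (𝓝 1) := by
  have hd : Tendsto (fun n : ℕ => d + (n:ℝ)) atTop atTop :=
    tendsto_atTop_add_const_left _ d tendsto_natCast_atTop_atTop
  have h0 : Tendsto (fun n : ℕ => (d + (n:ℝ))⁻¹) atTop (𝓝 0) := hd.inv_tendsto_atTop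
  have h1 : Tendsto (fun n : ℕ => 1 + (c - d) * (d + (n:ℝ))⁻¹) atTop (𝓝 (1 + (c - d) * 0)) :=
    tendsto_const_nhds.add (tendsto_const_nhds.mul h0)
  rw [mul_zero, add_zero] at h1
  apply h1.congr'
  filter_upwards [hd.eventually_gt_atTop 0] with n hn
  field_simp
  ring

lemma summable_master {β b : ℝ} (hβ : 0 < β) (hb : 0 < b) (hb1 : b < 1) :
    Summable (fun n : ℕ => coef β n * (β + n + 1) ^ 2 * b ^ n) := by
  set v : ℕ → ℝ := fun n => coef β n * (β + n + 1) ^ 2 * b ^ n with hv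
  have hvpos : ∀ n, 0 < v n := by
    intro n
    have := coef_pos hβ n
    have : (0:ℝ) < β + n + 1 := by positivity
    have hb' := hb
    show 0 < coef β n * (β + n + 1) ^ 2 * b ^ n
    positivity
  apply summable_of_ratio_test_tendsto_lt_one hb1
  · filter_upwards with n; exact (hvpos n).ne'
  · have key : ∀ n : ℕ, ‖v (n+1)‖ / ‖v n‖ =
        ((β + n) / (2 * β + n)) * ((β + n) / (1 + n)) * (((β + n + 2) / (β + n + 1)) ^ 2) * b := by
      intro n
      rw [Real.norm_eq_abs, Real.norm_eq_abs, abs_of_pos (hvpos _), abs_of_pos (hvpos _)]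
      show coef β (n+1) * (β + (n+1:ℕ) + 1) ^ 2 * b ^ (n+1) / (coef β n * (β + n + 1) ^ 2 * b ^ n) = _
      rw [coef_succ hβ n]
      have h1 : coef β n ≠ 0 := (coef_pos hβ n).ne'
      have h2 : (0:ℝ) < 2 * β + n := by positivity
      have h3 : (0:ℝ) < (n:ℝ) + 1 := by positivity
      have h4 : (0:ℝ) < β + n + 1 := by positivity
      have h5 : b ^ n ≠ 0 := by positivity
      push_cast
      field_simp
      ring
    have t1 := tendsto_ratio_aux β (2*β)
    have t2 : Tendsto (fun n : ℕ => (β + n) / (1 + n)) atTop (𝓝 1) := by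
      simpa [add_comm] using tendsto_ratio_aux β 1
    have t3 := (tendsto_ratio_aux (β+2) (β+1)).pow 2
    have t4 := ((t1.mul t2).mul t3).mul_const b
    rw [show ((1:ℝ) * 1 * 1 ^ 2) * b = b by ring] at t4
    refine t4.congr (fun n => ?_)
    rw [key n]; ring_nf

lemma rpow_bound {a b y : ℝ} (ha : 0 < a) (hy : y ∈ Set.Icc a b) (c : ℝ) :
    y ^ c ≤ a ^ c + b ^ c := by
  have hy0 : 0 < y := lt_of_lt_of_le ha hy.1
  have hb0 : 0 < b := lt_of_lt_of_le hy0 hy.2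
  rcases le_or_gt 0 c with h | h
  · have h1 : y ^ c ≤ b ^ c := Real.rpow_le_rpow hy0.le hy.2 h
    have h2 : 0 ≤ a ^ c := (Real.rpow_pos_of_pos ha c).le
    linarith
  · have h1 : y ^ c ≤ a ^ c := Real.rpow_le_rpow_of_nonpos ha hy.1 h.le
    have h2 : 0 ≤ b ^ c := (Real.rpow_pos_of_pos hb0 c).le
    linarith

lemma rpow_shift_bound {a b y : ℝ} (ha : 0 < a) (hy : y ∈ Set.Icc a b) (c : ℝ) (n : ℕ) :
    y ^ (c + n) ≤ (a ^ c + b ^ c) * b ^ n := by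
  have hy0 : 0 < y := lt_of_lt_of_le ha hy.1
  have hb0 : 0 < b := lt_of_lt_of_le hy0 hy.2
  rw [Real.rpow_add hy0, Real.rpow_natCast]
  have h1 : y ^ c ≤ a ^ c + b ^ c := rpow_bound ha hy c
  have h2 : y ^ n ≤ b ^ n := pow_le_pow_left₀ hy0.le hy.2 n
  have h3 : (0:ℝ) < y ^ c := Real.rpow_pos_of_pos hy0 c
  have h4 : (0:ℝ) ≤ y ^ n := by positivity
  exact mul_le_mul h1 h2 h4 (by linarith)

noncomputable def kd (β x : ℝ) : ℝ := ∑' n : ℕ, coef β n * ((β + n) * x ^ (β + n - 1))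

noncomputable def kdd (β x : ℝ) : ℝ :=
  ∑' n : ℕ, coef β n * ((β + n) * ((β + n - 1) * x ^ (β + n - 2)))

lemma kblock_eq_tsum {β x : ℝ} (hx : x ∈ Set.Ioo (0:ℝ) 1) :
    kblock β x = ∑' n : ℕ, coef β n * x ^ (β + n) := by
  have h : F21 β β (2 * β) x = ∑' n : ℕ, coef β n * x ^ n := rfl
  rw [kblock, h, ← tsum_mul_left]
  apply tsum_congr
  intro n
  rw [Real.rpow_add hx.1, Real.rpow_natCast]
  ring

lemma hasDerivAt_kterm (β : ℝ) (n : ℕ) {y : ℝ} (hy : 0 < y) :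
    HasDerivAt (fun w : ℝ => coef β n * w ^ (β + n))
      (coef β n * ((β + n) * y ^ (β + n - 1))) y :=
  (Real.hasDerivAt_rpow_const (Or.inl hy.ne')).const_mul _

lemma hasDerivAt_kdterm (β : ℝ) (n : ℕ) {y : ℝ} (hy : 0 < y) :
    HasDerivAt (fun w : ℝ => coef β n * ((β + n) * w ^ (β + n - 1)))
      (coef β n * ((β + n) * ((β + n - 1) * y ^ (β + n - 2)))) y := by
  have h := (((Real.hasDerivAt_rpow_const (p := β + n - 1) (Or.inl hy.ne')).const_mul
    (β + n)).const_mul (coef β n))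
  have he : β + n - 1 - 1 = β + n - 2 := by ring
  rw [he] at h
  exact h

lemma norm_T0_le {β a b y : ℝ} (hβ : 0 < β) (ha : 0 < a) (hy : y ∈ Set.Icc a b) (n : ℕ) :
    ‖coef β n * y ^ (β + n)‖ ≤ (a ^ β + b ^ β) * (coef β n * (β + n + 1) ^ 2 * b ^ n) := by
  have hy0 : 0 < y := lt_of_lt_of_le ha hy.1
  have hb0 : 0 < b := lt_of_lt_of_le hy0 hy.2
  have hn : (0:ℝ) ≤ n := Nat.cast_nonneg n
  have hrp : (0:ℝ) < y ^ (β + n) := Real.rpow_pos_of_pos hy0 _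
  rw [Real.norm_eq_abs, abs_of_pos (mul_pos (coef_pos hβ n) hrp)]
  have e1 : y ^ (β + n) ≤ (a ^ β + b ^ β) * b ^ n := rpow_shift_bound ha hy β n
  have e2 : (1:ℝ) ≤ (β + n + 1) ^ 2 := by nlinarith
  have hnn : (0:ℝ) ≤ coef β n * ((a ^ β + b ^ β) * b ^ n) :=
    mul_nonneg (coef_pos hβ n).le (mul_nonneg
      (add_nonneg (Real.rpow_nonneg ha.le β) (Real.rpow_nonneg hb0.le β)) (by positivity))
  calc coef β n * y ^ (β + n) ≤ coef β n * ((a ^ β + b ^ β) * b ^ n) :=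
        mul_le_mul_of_nonneg_left e1 (coef_pos hβ n).le
    _ = 1 * (coef β n * ((a ^ β + b ^ β) * b ^ n)) := by ring
    _ ≤ (β + n + 1) ^ 2 * (coef β n * ((a ^ β + b ^ β) * b ^ n)) :=
        mul_le_mul_of_nonneg_right e2 hnn
    _ = (a ^ β + b ^ β) * (coef β n * (β + n + 1) ^ 2 * b ^ n) := by ring

lemma norm_T1_le {β a b y : ℝ} (hβ : 0 < β) (ha : 0 < a) (hy : y ∈ Set.Icc a b) (n : ℕ) :
    ‖coef β n * ((β + n) * y ^ (β + n - 1))‖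
      ≤ (a ^ (β - 1) + b ^ (β - 1)) * (coef β n * (β + n + 1) ^ 2 * b ^ n) := by
  have hy0 : 0 < y := lt_of_lt_of_le ha hy.1
  have hn : (0:ℝ) ≤ n := Nat.cast_nonneg n
  have hrp : (0:ℝ) < y ^ (β + n - 1) := Real.rpow_pos_of_pos hy0 _
  rw [Real.norm_eq_abs, abs_of_pos (mul_pos (coef_pos hβ n) (mul_pos (by linarith) hrp))]
  have e1 : y ^ (β + n - 1) ≤ (a ^ (β - 1) + b ^ (β - 1)) * b ^ n := by
    have := rpow_shift_bound ha hy (β - 1) n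
    rwa [show β - 1 + n = β + n - 1 by ring] at this
  have e2 : β + n ≤ (β + n + 1) ^ 2 := by nlinarith
  calc coef β n * ((β + n) * y ^ (β + n - 1))
      ≤ coef β n * ((β + n + 1) ^ 2 * ((a ^ (β - 1) + b ^ (β - 1)) * b ^ n)) :=
        mul_le_mul_of_nonneg_left (mul_le_mul e2 e1 hrp.le (by positivity)) (coef_pos hβ n).le
    _ = (a ^ (β - 1) + b ^ (β - 1)) * (coef β n * (β + n + 1) ^ 2 * b ^ n) := by ring

lemma norm_T2_le {β a b y : ℝ} (hβ : 0 < β) (ha : 0 < a) (hy : y ∈ Set.Icc a b) (n : ℕ) :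
    ‖coef β n * ((β + n) * ((β + n - 1) * y ^ (β + n - 2)))‖
      ≤ (a ^ (β - 2) + b ^ (β - 2)) * (coef β n * (β + n + 1) ^ 2 * b ^ n) := by
  have hy0 : 0 < y := lt_of_lt_of_le ha hy.1
  have hn : (0:ℝ) ≤ n := Nat.cast_nonneg n
  have hbn : (0:ℝ) < β + n + 1 := by linarith
  have hrp : (0:ℝ) < y ^ (β + n - 2) := Real.rpow_pos_of_pos hy0 _
  rw [Real.norm_eq_abs, abs_mul, abs_mul, abs_mul,
    abs_of_pos (coef_pos hβ n), abs_of_pos (show (0:ℝ) < β + n by linarith), abs_of_pos hrp]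
  have e0 : |β + n - 1| ≤ β + n + 1 := abs_le.2 ⟨by linarith, by linarith⟩
  have e1 : y ^ (β + n - 2) ≤ (a ^ (β - 2) + b ^ (β - 2)) * b ^ n := by
    have := rpow_shift_bound ha hy (β - 2) n
    rwa [show β - 2 + n = β + n - 2 by ring] at this
  have inner1 : |β + n - 1| * y ^ (β + n - 2)
      ≤ (β + n + 1) * ((a ^ (β - 2) + b ^ (β - 2)) * b ^ n) :=
    mul_le_mul e0 e1 hrp.le hbn.le
  have inner2 : (β + n) * (|β + n - 1| * y ^ (β + n - 2))
      ≤ (β + n + 1) * ((β + n + 1) * ((a ^ (β - 2) + b ^ (β - 2)) * b ^ n)) :=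
    mul_le_mul (by linarith) inner1 (mul_nonneg (abs_nonneg _) hrp.le) hbn.le
  calc coef β n * ((β + n) * (|β + n - 1| * y ^ (β + n - 2)))
      ≤ coef β n * ((β + n + 1) * ((β + n + 1) * ((a ^ (β - 2) + b ^ (β - 2)) * b ^ n))) :=
        mul_le_mul_of_nonneg_left inner2 (coef_pos hβ n).le
    _ = (a ^ (β - 2) + b ^ (β - 2)) * (coef β n * (β + n + 1) ^ 2 * b ^ n) := by ring

lemma summable_k {β x : ℝ} (hβ : 0 < β) (hx : x ∈ Set.Ioo (0:ℝ) 1) :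
    Summable (fun n : ℕ => coef β n * x ^ (β + n)) :=
  Summable.of_norm_bounded ((summable_master hβ hx.1 hx.2).mul_left (x ^ β + x ^ β))
    (fun n => norm_T0_le hβ hx.1 ⟨le_refl x, le_refl x⟩ n)

lemma summable_kd {β x : ℝ} (hβ : 0 < β) (hx : x ∈ Set.Ioo (0:ℝ) 1) :
    Summable (fun n : ℕ => coef β n * ((β + n) * x ^ (β + n - 1))) :=
  Summable.of_norm_bounded
    ((summable_master hβ hx.1 hx.2).mul_left (x ^ (β - 1) + x ^ (β - 1)))
    (fun n => norm_T1_le hβ hx.1 ⟨le_refl x, le_refl x⟩ n)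

lemma summable_kdd {β x : ℝ} (hβ : 0 < β) (hx : x ∈ Set.Ioo (0:ℝ) 1) :
    Summable (fun n : ℕ => coef β n * ((β + n) * ((β + n - 1) * x ^ (β + n - 2)))) :=
  Summable.of_norm_bounded
    ((summable_master hβ hx.1 hx.2).mul_left (x ^ (β - 2) + x ^ (β - 2)))
    (fun n => norm_T2_le hβ hx.1 ⟨le_refl x, le_refl x⟩ n)

lemma hasDerivAt_kblock {β : ℝ} (hβ : 0 < β) {x : ℝ} (hx : x ∈ Set.Ioo (0:ℝ) 1) :
    HasDerivAt (kblock β) (kd β x) x := by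
  obtain ⟨hx0, hx1⟩ := hx
  have ha : (0:ℝ) < x / 2 := by linarith
  have hb1 : (x + 1) / 2 < 1 := by linarith
  have hb0 : (0:ℝ) < (x + 1) / 2 := by linarith
  have hmem : x ∈ Set.Ioo (x / 2) ((x + 1) / 2) := ⟨by linarith, by linarith⟩
  have key : HasDerivAt (fun z => ∑' n : ℕ, coef β n * z ^ (β + n))
      (∑' n : ℕ, coef β n * ((β + n) * x ^ (β + n - 1))) x := by
    apply hasDerivAt_tsum_of_isPreconnected
      (((summable_master hβ hb0 hb1).mul_left ((x/2) ^ (β-1) + ((x+1)/2) ^ (β-1))))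
      isOpen_Ioo isPreconnected_Ioo
      (fun n y hy => hasDerivAt_kterm β n (ha.trans hy.1))
      (fun n y hy => norm_T1_le hβ ha ⟨hy.1.le, hy.2.le⟩ n) hmem
      (summable_k hβ ⟨hx0, hx1⟩) hmem
  have heq : kblock β =ᶠ[nhds x] fun z => ∑' n : ℕ, coef β n * z ^ (β + n) := by
    filter_upwards [isOpen_Ioo.mem_nhds (⟨hx0, hx1⟩ : x ∈ Set.Ioo (0:ℝ) 1)] with y hy
    exact kblock_eq_tsum hy
  exact HasDerivAt.congr_of_eventuallyEq key heq

lemma hasDerivAt_kd {β : ℝ} (hβ : 0 < β) {x : ℝ} (hx : x ∈ Set.Ioo (0:ℝ) 1) :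
    HasDerivAt (kd β) (kdd β x) x := by
  obtain ⟨hx0, hx1⟩ := hx
  have ha : (0:ℝ) < x / 2 := by linarith
  have hb1 : (x + 1) / 2 < 1 := by linarith
  have hb0 : (0:ℝ) < (x + 1) / 2 := by linarith
  have hmem : x ∈ Set.Ioo (x / 2) ((x + 1) / 2) := ⟨by linarith, by linarith⟩
  exact hasDerivAt_tsum_of_isPreconnected
    (((summable_master hβ hb0 hb1).mul_left ((x/2) ^ (β-2) + ((x+1)/2) ^ (β-2))))
    isOpen_Ioo isPreconnected_Ioo
    (fun n y hy => hasDerivAt_kdterm β n (ha.trans hy.1))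
    (fun n y hy => norm_T2_le hβ ha ⟨hy.1.le, hy.2.le⟩ n) hmem
    (summable_kd hβ ⟨hx0, hx1⟩) hmem

noncomputable def Aterm (β x : ℝ) (n : ℕ) : ℝ :=
  coef β n * ((n : ℝ) * (2 * β + n - 1)) * x ^ (β + n)

noncomputable def Eterm (β x : ℝ) (n : ℕ) : ℝ :=
  coef β n * (β + n) ^ 2 * x ^ (β + n + 1)

lemma summable_Aterm {β x : ℝ} (hβ : 0 < β) (hx : x ∈ Set.Ioo (0:ℝ) 1) :
    Summable (Aterm β x) := by
  obtain ⟨hx0, hx1⟩ := hx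
  apply Summable.of_norm_bounded ((summable_master hβ hx0 hx1).mul_left (4 * x ^ β))
  intro n
  have hn : (0:ℝ) ≤ n := Nat.cast_nonneg n
  have hrp : (0:ℝ) < x ^ (β + n) := Real.rpow_pos_of_pos hx0 _
  have hxb : (0:ℝ) < x ^ β := Real.rpow_pos_of_pos hx0 _
  have hc := coef_pos hβ n
  have e1 : x ^ (β + n) ≤ (x ^ β + x ^ β) * x ^ n :=
    rpow_shift_bound hx0 ⟨le_refl x, le_refl x⟩ β n
  have e0 : |(n : ℝ) * (2 * β + n - 1)| ≤ 2 * (β + n + 1) ^ 2 := by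
    rw [abs_mul, abs_of_nonneg hn]
    have h1 : |2 * β + n - 1| ≤ 2 * (β + n + 1) := abs_le.2 ⟨by linarith, by linarith⟩
    nlinarith [abs_nonneg (2 * β + (n:ℝ) - 1)]
  rw [Aterm, Real.norm_eq_abs, abs_mul, abs_mul, abs_of_pos hc, abs_of_pos hrp]
  calc coef β n * |(n : ℝ) * (2 * β + n - 1)| * x ^ (β + n)
      ≤ coef β n * (2 * (β + n + 1) ^ 2) * ((x ^ β + x ^ β) * x ^ n) := by
        apply mul_le_mul (mul_le_mul_of_nonneg_left e0 hc.le) e1 hrp.le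
        positivity
    _ = 4 * x ^ β * (coef β n * (β + n + 1) ^ 2 * x ^ n) := by ring

lemma summable_Eterm {β x : ℝ} (hβ : 0 < β) (hx : x ∈ Set.Ioo (0:ℝ) 1) :
    Summable (Eterm β x) := by
  obtain ⟨hx0, hx1⟩ := hx
  apply Summable.of_norm_bounded ((summable_master hβ hx0 hx1).mul_left (2 * x ^ (β + 1)))
  intro n
  have hn : (0:ℝ) ≤ n := Nat.cast_nonneg n
  have hrp : (0:ℝ) < x ^ (β + n + 1) := Real.rpow_pos_of_pos hx0 _
  have hc := coef_pos hβ n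
  have e1 : x ^ (β + n + 1) ≤ (x ^ (β + 1) + x ^ (β + 1)) * x ^ n := by
    have := rpow_shift_bound hx0 (⟨le_refl x, le_refl x⟩ : x ∈ Set.Icc x x) (β + 1) n
    rwa [show β + 1 + n = β + n + 1 by ring] at this
  have e0 : (β + n) ^ 2 ≤ (β + n + 1) ^ 2 := by nlinarith
  rw [Eterm, Real.norm_eq_abs, abs_mul, abs_mul, abs_of_pos hc, abs_of_pos hrp,
    abs_of_nonneg (sq_nonneg _)]
  calc coef β n * (β + n) ^ 2 * x ^ (β + n + 1)
      ≤ coef β n * (β + n + 1) ^ 2 * ((x ^ (β + 1) + x ^ (β + 1)) * x ^ n) := by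
        apply mul_le_mul (mul_le_mul_of_nonneg_left e0 hc.le) e1 hrp.le
        positivity
    _ = 2 * x ^ (β + 1) * (coef β n * (β + n + 1) ^ 2 * x ^ n) := by ring

lemma tsum_Aterm_eq {β x : ℝ} (hβ : 0 < β) (hx : x ∈ Set.Ioo (0:ℝ) 1) :
    ∑' n, Aterm β x n = ∑' n, Eterm β x n := by
  rw [Summable.tsum_eq_zero_add (summable_Aterm hβ hx)]
  have hA0 : Aterm β x 0 = 0 := by simp [Aterm]
  rw [hA0, zero_add]
  apply tsum_congr
  intro n
  have h2 : (0:ℝ) < 2 * β + n := by have : (0:ℝ) ≤ n := Nat.cast_nonneg n; linarith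
  have h3 : (0:ℝ) < (n:ℝ) + 1 := by have : (0:ℝ) ≤ n := Nat.cast_nonneg n; linarith
  rw [Aterm, Eterm, coef_succ hβ n]
  push_cast
  rw [show β + ((n:ℝ) + 1) = β + n + 1 by ring]
  field_simp
  ring

lemma kblock_ode {β x : ℝ} (hβ : 0 < β) (hx : x ∈ Set.Ioo (0:ℝ) 1) :
    (1 - x) * x ^ 2 * kdd β x - x ^ 2 * kd β x = β * (β - 1) * kblock β x := by
  have hx0 := hx.1
  have sT0 := summable_k hβ hx
  have sT1 := summable_kd hβ hx
  have sT2 := summable_kdd hβ hx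
  have sA := summable_Aterm hβ hx
  have sE := summable_Eterm hβ hx
  have hterm : ∀ n : ℕ,
      (1 - x) * x ^ 2 * (coef β n * ((β + n) * ((β + n - 1) * x ^ (β + n - 2))))
        - x ^ 2 * (coef β n * ((β + n) * x ^ (β + n - 1)))
      = β * (β - 1) * (coef β n * x ^ (β + n)) + (Aterm β x n - Eterm β x n) := by
    intro n
    have e1 : x ^ (β + n - 1) = x ^ (β + n - 2) * x := by
      rw [show β + (n:ℝ) - 1 = (β + n - 2) + 1 by ring, Real.rpow_add hx0, Real.rpow_one]
    have e2 : x ^ (β + (n:ℝ)) = x ^ (β + n - 2) * x * x := by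
      conv_lhs => rw [show β + (n:ℝ) = ((β + n - 2) + 1) + 1 by ring]
      rw [Real.rpow_add hx0, Real.rpow_add hx0, Real.rpow_one]
    have e3 : x ^ (β + (n:ℝ) + 1) = x ^ (β + n - 2) * x * x * x := by
      conv_lhs => rw [show β + (n:ℝ) + 1 = (((β + n - 2) + 1) + 1) + 1 by ring]
      rw [Real.rpow_add hx0, Real.rpow_add hx0, Real.rpow_add hx0, Real.rpow_one]
    rw [Aterm, Eterm, e1, e2, e3]
    ring
  rw [kblock_eq_tsum hx, kdd, kd, ← tsum_mul_left, ← tsum_mul_left,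
    ← Summable.tsum_sub (sT2.mul_left _) (sT1.mul_left _)]
  rw [tsum_congr hterm]
  rw [Summable.tsum_add (sT0.mul_left _) (sA.sub sE), Summable.tsum_sub sA sE, tsum_Aterm_eq hβ hx,
    sub_self, add_zero, tsum_mul_left]

lemma deriv_kblock {β : ℝ} (hβ : 0 < β) {x : ℝ} (hx : x ∈ Set.Ioo (0:ℝ) 1) :
    deriv (kblock β) x = kd β x := (hasDerivAt_kblock hβ hx).deriv

noncomputable def Qf (h hb c y : ℝ) : ℝ :=
  kblock h y * kblock hb c - kblock h c * kblock hb y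
noncomputable def Qd (h hb c y : ℝ) : ℝ :=
  kd h y * kblock hb c - kblock h c * kd hb y
noncomputable def Qdd (h hb c y : ℝ) : ℝ :=
  kdd h y * kblock hb c - kblock h c * kdd hb y
noncomputable def SliceF (h hb c : ℝ) (y : ℝ) : ℝ := y * c / (y - c) * Qf h hb c y
noncomputable def SliceD1 (h hb c : ℝ) (y : ℝ) : ℝ :=
  -c ^ 2 / (y - c) ^ 2 * Qf h hb c y + y * c / (y - c) * Qd h hb c y
noncomputable def SliceD2 (h hb c : ℝ) (y : ℝ) : ℝ :=
  2 * c ^ 2 / (y - c) ^ 3 * Qf h hb c y + (-c ^ 2 / (y - c) ^ 2) * Qd h hb c y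
    + ((-c ^ 2 / (y - c) ^ 2) * Qd h hb c y + y * c / (y - c) * Qdd h hb c y)

lemma hasDerivAt_Qf {h hb : ℝ} (hh : 0 < h) (hhb : 0 < hb) (c : ℝ) {y : ℝ}
    (hy : y ∈ Set.Ioo (0:ℝ) 1) : HasDerivAt (Qf h hb c) (Qd h hb c y) y := by
  exact ((hasDerivAt_kblock hh hy).mul_const (kblock hb c)).sub
    ((hasDerivAt_kblock hhb hy).const_mul (kblock h c))

lemma hasDerivAt_Qd {h hb : ℝ} (hh : 0 < h) (hhb : 0 < hb) (c : ℝ) {y : ℝ}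
    (hy : y ∈ Set.Ioo (0:ℝ) 1) : HasDerivAt (Qd h hb c) (Qdd h hb c y) y := by
  exact ((hasDerivAt_kd hh hy).mul_const (kblock hb c)).sub
    ((hasDerivAt_kd hhb hy).const_mul (kblock h c))

lemma hasDerivAt_SliceF {h hb : ℝ} (hh : 0 < h) (hhb : 0 < hb) {c y : ℝ}
    (hy : y ∈ Set.Ioo (0:ℝ) 1) (hne : y ≠ c) :
    HasDerivAt (SliceF h hb c) (SliceD1 h hb c y) y := by
  have hsub : y - c ≠ 0 := sub_ne_zero.2 hne
  have h1 : HasDerivAt (fun w : ℝ => w * c) c y := by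
    simpa using (hasDerivAt_id y).mul_const c
  have h2 : HasDerivAt (fun w : ℝ => w - c) 1 y := (hasDerivAt_id y).sub_const c
  have h3 := (h1.div h2 hsub).mul (hasDerivAt_Qf hh hhb c hy)
  have heq : (c * (y - c) - y * c * 1) / (y - c) ^ 2 * Qf h hb c y
      + y * c / (y - c) * Qd h hb c y = SliceD1 h hb c y := by
    rw [SliceD1]
    field_simp
    ring
  exact heq ▸ h3

lemma hasDerivAt_SliceD1 {h hb : ℝ} (hh : 0 < h) (hhb : 0 < hb) {c y : ℝ}
    (hy : y ∈ Set.Ioo (0:ℝ) 1) (hne : y ≠ c) :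
    HasDerivAt (SliceD1 h hb c) (SliceD2 h hb c y) y := by
  have hsub : y - c ≠ 0 := sub_ne_zero.2 hne
  have h2 : HasDerivAt (fun w : ℝ => w - c) 1 y := (hasDerivAt_id y).sub_const c
  have hr1 : HasDerivAt (fun w : ℝ => -c ^ 2 / (w - c) ^ 2)
      ((0 * (y - c) ^ 2 - -c ^ 2 * (2 * (y - c) ^ 1 * 1)) / ((y - c) ^ 2) ^ 2) y :=
    (hasDerivAt_const y (-c ^ 2)).div (h2.pow 2) (pow_ne_zero 2 hsub)
  have hr2 : HasDerivAt (fun w : ℝ => w * c) c y := by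
    simpa using (hasDerivAt_id y).mul_const c
  have h3 := (hr1.mul (hasDerivAt_Qf hh hhb c hy)).add
    (((hr2.div h2 hsub)).mul (hasDerivAt_Qd hh hhb c hy))
  have heq : ((0 * (y - c) ^ 2 - -c ^ 2 * (2 * (y - c) ^ 1 * 1)) / ((y - c) ^ 2) ^ 2 *
        Qf h hb c y + -c ^ 2 / (y - c) ^ 2 * Qd h hb c y)
      + ((c * (y - c) - y * c * 1) / (y - c) ^ 2 * Qd h hb c y
        + y * c / (y - c) * Qdd h hb c y) = SliceD2 h hb c y := by
    rw [SliceD2]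
    field_simp
    ring
  exact heq ▸ h3

lemma deriv_SliceF {h hb : ℝ} (hh : 0 < h) (hhb : 0 < hb) {c y : ℝ}
    (hy : y ∈ Set.Ioo (0:ℝ) 1) (hne : y ≠ c) :
    deriv (SliceF h hb c) y = SliceD1 h hb c y := (hasDerivAt_SliceF hh hhb hy hne).deriv

lemma deriv2_SliceF {h hb : ℝ} (hh : 0 < h) (hhb : 0 < hb) {c y : ℝ}
    (hy : y ∈ Set.Ioo (0:ℝ) 1) (hne : y ≠ c) :
    deriv (deriv (SliceF h hb c)) y = SliceD2 h hb c y := by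
  have hU : IsOpen (Set.Ioo (0:ℝ) 1 ∩ {c}ᶜ) := isOpen_Ioo.inter isOpen_compl_singleton
  have hev : deriv (SliceF h hb c) =ᶠ[nhds y] SliceD1 h hb c := by
    filter_upwards [hU.mem_nhds ⟨hy, hne⟩] with w hw
    exact deriv_SliceF hh hhb hw.1 hw.2
  rw [hev.deriv_eq]
  exact (hasDerivAt_SliceD1 hh hhb hy hne).deriv


set_option maxHeartbeats 1600000

/-- the 4d conformal block is an eigenfunction of the quadratic
Casimir: for τ > 2, ℓ ∈ ℕ and z ≠ z̄ in (0,1), with Δ = τ + ℓ,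
`C₂ G_{τ,ℓ}(z,z̄) = ½(ℓ(ℓ+2) + Δ(Δ−4))·G_{τ,ℓ}(z,z̄)`. -/
theorem casimir_eigenvalue_4d (τ : ℝ) (hτ : 2 < τ) (ℓ : ℕ) (z zb : ℝ)
    (hz : z ∈ Set.Ioo (0 : ℝ) 1) (hzb : zb ∈ Set.Ioo (0 : ℝ) 1) (hne : z ≠ zb) :
    Casimir2 (G4block τ ℓ) z zb
      = 1 / 2 * ((ℓ : ℝ) * ((ℓ : ℝ) + 2) + (τ + (ℓ : ℝ)) * ((τ + (ℓ : ℝ)) - 4))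
          * G4block τ ℓ z zb := by
  have hln : (0:ℝ) ≤ (ℓ : ℝ) := Nat.cast_nonneg ℓ
  have hh : (0:ℝ) < τ / 2 + (ℓ : ℝ) := by linarith
  have hhb : (0:ℝ) < τ / 2 - 1 := by linarith
  have hzbne : zb ≠ z := Ne.symm hne
  have e1 : (fun w => G4block τ ℓ w zb) = SliceF (τ / 2 + (ℓ : ℝ)) (τ / 2 - 1) zb := rfl
  have e2 : (fun w => G4block τ ℓ z w) = SliceF (τ / 2 + (ℓ : ℝ)) (τ / 2 - 1) z := by
    funext w
    by_cases hw : w = z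
    · subst hw; simp [G4block, SliceF, Qf]
    · have h1 : z - w ≠ 0 := sub_ne_zero.2 (Ne.symm hw)
      have h2 : w - z ≠ 0 := sub_ne_zero.2 hw
      simp only [G4block, SliceF, Qf]
      field_simp
      ring
  have eG : G4block τ ℓ z zb = SliceF (τ / 2 + (ℓ : ℝ)) (τ / 2 - 1) zb z := congrFun e1 z
  simp only [Casimir2, Dop]
  rw [e1, e2, eG]
  rw [deriv_SliceF hh hhb hz hne, deriv2_SliceF hh hhb hz hne,
      deriv_SliceF hh hhb hzb hzbne, deriv2_SliceF hh hhb hzb hzbne]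
  have hz0 := hz.1
  have hz1 := hz.2
  have hzb0 := hzb.1
  have hzb1 := hzb.2
  have hz2 : (1 - z) * z ^ 2 ≠ 0 := ne_of_gt (mul_pos (by linarith) (pow_pos hz0 2))
  have hzb2 : (1 - zb) * zb ^ 2 ≠ 0 := ne_of_gt (mul_pos (by linarith) (pow_pos hzb0 2))
  have K1 : kdd (τ / 2 + (ℓ : ℝ)) z
      = ((τ / 2 + (ℓ : ℝ)) * ((τ / 2 + (ℓ : ℝ)) - 1) * kblock (τ / 2 + (ℓ : ℝ)) z
        + z ^ 2 * kd (τ / 2 + (ℓ : ℝ)) z) / ((1 - z) * z ^ 2) := by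
    rw [eq_div_iff hz2]
    have := kblock_ode hh hz
    linarith
  have K2 : kdd (τ / 2 - 1) z
      = ((τ / 2 - 1) * ((τ / 2 - 1) - 1) * kblock (τ / 2 - 1) z
        + z ^ 2 * kd (τ / 2 - 1) z) / ((1 - z) * z ^ 2) := by
    rw [eq_div_iff hz2]
    have := kblock_ode hhb hz
    linarith
  have K3 : kdd (τ / 2 + (ℓ : ℝ)) zb
      = ((τ / 2 + (ℓ : ℝ)) * ((τ / 2 + (ℓ : ℝ)) - 1) * kblock (τ / 2 + (ℓ : ℝ)) zb
        + zb ^ 2 * kd (τ / 2 + (ℓ : ℝ)) zb) / ((1 - zb) * zb ^ 2) := by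
    rw [eq_div_iff hzb2]
    have := kblock_ode hh hzb
    linarith
  have K4 : kdd (τ / 2 - 1) zb
      = ((τ / 2 - 1) * ((τ / 2 - 1) - 1) * kblock (τ / 2 - 1) zb
        + zb ^ 2 * kd (τ / 2 - 1) zb) / ((1 - zb) * zb ^ 2) := by
    rw [eq_div_iff hzb2]
    have := kblock_ode hhb hzb
    linarith
  have hev : 1 / 2 * ((ℓ : ℝ) * ((ℓ : ℝ) + 2) + (τ + (ℓ : ℝ)) * ((τ + (ℓ : ℝ)) - 4))
      = (τ / 2 + (ℓ : ℝ)) * ((τ / 2 + (ℓ : ℝ)) - 1) + (τ / 2 - 1) * ((τ / 2 - 1) - 1) - 2 := by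
    ring
  rw [hev]
  simp only [SliceF, SliceD1, SliceD2, Qf, Qd, Qdd]
  rw [K1, K2, K3, K4]
  have hzzb : z - zb ≠ 0 := sub_ne_zero.2 hne
  have hzbz : zb - z ≠ 0 := sub_ne_zero.2 hzbne
  have hz1' : (1:ℝ) - z ≠ 0 := ne_of_gt (by linarith)
  have hzb1' : (1:ℝ) - zb ≠ 0 := ne_of_gt (by linarith)
  have hzne0 : z ≠ 0 := ne_of_gt hz0
  have hzbne0 : zb ≠ 0 := ne_of_gt hzb0
  field_simp
  ring
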